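/- Let k be a field and L a finite separable field extension of k. Then the kernel of the multiplication map μ : L ⊗_k L → L, defined by μ(x ⊗ y) = xy, is generated as an ideal by a single idempotent element of L ⊗_k L. -/

import Mathlib

open TensorProduct

universe u v

lemma formallyUnramified_of_isSeparable_aux {k : Type u} {L : Type v}
    [Field k] [Field L] [Algebra k L] [Algebra.IsSeparable k L] :
    Algebra.FormallyUnramified k L := by
  letI K' : Type (max u v) := ULift.{v} k
  letI L' : Type (max u v) := ULift.{u} L
  letI : Algebra K' L :=
    { algebraMap := (algebraMap k L).comp (ULift.ringEquiv (R := k)).toRingHom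
      smul := fun a b => a.down • b
      commutes' := fun r x => mul_comm _ _
      smul_def' := fun r x => Algebra.smul_def r.down x }
  haveI : IsScalarTower k K' L := ⟨fun x y z => by
    change (x * y.down) • z = x • (y.down • z)
    rw [mul_smul]⟩
  haveI : Algebra.IsSeparable K' L :=
    Algebra.isSeparable_tower_top_of_isSeparable k K' L
  haveI : Algebra.IsSeparable K' L' := by
    refine Algebra.IsSeparable.of_equiv_equiv (RingEquiv.refl K')
      (ULift.ringEquiv : L' ≃+* L).symm ?_
    ext x; rfl
  haveI : Algebra.FormallyUnramified K' L' :=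
    Algebra.FormallyUnramified.of_isSeparable K' L'
  letI e : L' ≃ₐ[K'] L :=
    AlgEquiv.ofRingEquiv (f := (ULift.ringEquiv : L' ≃+* L)) fun x => rfl
  haveI : Algebra.FormallyUnramified K' L :=
    Algebra.FormallyUnramified.of_equiv e
  haveI : Algebra.FormallyUnramified k K' :=
    Algebra.FormallyUnramified.of_equiv
      (AlgEquiv.ofRingEquiv (f := (ULift.ringEquiv : K' ≃+* k).symm)
        (fun x => rfl) : k ≃ₐ[k] K')
  exact Algebra.FormallyUnramified.comp k K' L

/-- For a finite separable field extension `L/k`, the kernel of the multiplication map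
`L ⊗[k] L → L` is generated by a single idempotent element. -/
theorem ker_lmul'_eq_span_idempotent_of_finite_separable
    {k L : Type*} [Field k] [Field L] [Algebra k L]
    [FiniteDimensional k L] [Algebra.IsSeparable k L] :
    ∃ e : L ⊗[k] L, IsIdempotentElem e ∧
      RingHom.ker (Algebra.TensorProduct.lmul' k (S := L)) = Ideal.span {e} := by
  have h : Algebra.FormallyUnramified k L := formallyUnramified_of_isSeparable_aux
  have hfg := KaehlerDifferential.ideal_fg k L
  have := (Algebra.formallyUnramified_iff k L).mp h
  rw [KaehlerDifferential, Ideal.cotangent_subsingleton_iff,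
    Ideal.isIdempotentElem_iff_of_fg _ hfg] at this
  obtain ⟨e, he, heq⟩ := this
  exact ⟨e, he, heq⟩
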